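/- (Optimal shift for partial recovery codes) Let T and B be real numbers with B ≥ 0 and T − B ≥ 1, and for Δ ∈ (B, T] define f(Δ) = (Δ(T−Δ) + (B+1)) / (Δ(T−Δ) + (B+1)(T−Δ+2)). Then Δ* := T + 1 − √(T−B) satisfies B < Δ* ≤ T, f(Δ) ≤ f(Δ*) for every Δ ∈ (B, T], and f(Δ*) = ((T+2)√(T−B) − 2(T−B)) / ((T+B+3)√(T−B) − 2(T−B)). -/
import Mathlib


/-- Optimal shift for partial recovery codes: for real `B ≥ 0`, `T − B ≥ 1`, the rate
function `f(Δ) = (Δ(T−Δ)+(B+1))/(Δ(T−Δ)+(B+1)(T−Δ+2))` on `(B, T]` is maximized at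
`Δ* = T + 1 − √(T−B)`, which lies in `(B, T]`, and
`f(Δ*) = ((T+2)√(T−B) − 2(T−B)) / ((T+B+3)√(T−B) − 2(T−B))`. -/
theorem stmt12 (T B : ℝ) (hB : 0 ≤ B) (hTB : 1 ≤ T - B) :
    let f : ℝ → ℝ := fun Δ =>
      (Δ * (T - Δ) + (B + 1)) / (Δ * (T - Δ) + (B + 1) * (T - Δ + 2))
    let Δs : ℝ := T + 1 - Real.sqrt (T - B)
    B < Δs ∧ Δs ≤ T ∧
    (∀ Δ : ℝ, B < Δ → Δ ≤ T → f Δ ≤ f Δs) ∧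
    f Δs = ((T + 2) * Real.sqrt (T - B) - 2 * (T - B)) /
      ((T + B + 3) * Real.sqrt (T - B) - 2 * (T - B)) := by
  intro f Δs
  set s := Real.sqrt (T - B) with hs
  have hTB0 : (0:ℝ) ≤ T - B := by linarith
  have hs2 : s * s = T - B := Real.mul_self_sqrt hTB0
  have hs1 : 1 ≤ s := by
    rw [hs, show (1:ℝ) = Real.sqrt 1 by simp]
    exact Real.sqrt_le_sqrt hTB
  have hΔ : Δs = T + 1 - s := rfl
  have hΔB : B < Δs := by rw [hΔ]; nlinarith [sq_nonneg (s - 1)]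
  have hΔT : Δs ≤ T := by rw [hΔ]; linarith
  -- denominator at Δs is positive
  have hDs : 0 < Δs * (T - Δs) + (B + 1) * (T - Δs + 2) := by
    have h1 : 0 ≤ Δs * (T - Δs) := mul_nonneg (by linarith) (by linarith)
    nlinarith
  -- numerator and denominator values at Δs
  have hnum : Δs * (T - Δs) + (B + 1) = (T + 2) * s - 2 * (T - B) := by
    rw [hΔ]; linear_combination (-1 : ℝ) * hs2
  have hden : Δs * (T - Δs) + (B + 1) * (T - Δs + 2)
      = (T + B + 3) * s - 2 * (T - B) := by
    rw [hΔ]; linear_combination (-1 : ℝ) * hs2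
  refine ⟨hΔB, hΔT, ?_, ?_⟩
  · intro Δ hBΔ hΔT'
    have hD : 0 < Δ * (T - Δ) + (B + 1) * (T - Δ + 2) := by
      have h1 : 0 ≤ Δ * (T - Δ) := mul_nonneg (by linarith) (by linarith)
      nlinarith
    show (Δ * (T - Δ) + (B + 1)) / (Δ * (T - Δ) + (B + 1) * (T - Δ + 2))
        ≤ (Δs * (T - Δs) + (B + 1)) / (Δs * (T - Δs) + (B + 1) * (T - Δs + 2))
    rw [div_le_div_iff₀ hD hDs]
    have key : (Δs * (T - Δs) + (B + 1)) * (Δ * (T - Δ) + (B + 1) * (T - Δ + 2))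
        - (Δ * (T - Δ) + (B + 1)) * (Δs * (T - Δs) + (B + 1) * (T - Δs + 2))
        = (B + 1) * s * (T - Δ + 1 - s) ^ 2 := by
      rw [hΔ]; linear_combination ((B + 1) * (T - Δ + 1 - s)) * hs2
    nlinarith [mul_nonneg (mul_nonneg (by linarith : (0:ℝ) ≤ B + 1)
      (by linarith : (0:ℝ) ≤ s)) (sq_nonneg (T - Δ + 1 - s))]
  · show (Δs * (T - Δs) + (B + 1)) / (Δs * (T - Δs) + (B + 1) * (T - Δs + 2))
      = ((T + 2) * s - 2 * (T - B)) / ((T + B + 3) * s - 2 * (T - B))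
    rw [hnum, hden]
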